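/- Let Y ∼ N(0,1), let c ∈ ℝ with |c| ≥ 1, and let h_k denote the normalized probabilist's Hermite polynomials (orthonormal in L²(N(0,1))). Then for every k ≥ 0, E[h_k(cY)²] ≤ 2·(4c²)^k. -/

import Mathlib

open MeasureTheory ProbabilityTheory

/-- The normalized probabilist's Hermite polynomials, orthonormal in
`L²(N(0,1))`. -/
noncomputable def hermiteN (k : ℕ) (x : ℝ) : ℝ :=
  (Polynomial.aeval x (Polynomial.hermite k)) / Real.sqrt (Nat.factorial k)

namespace HermiteAux

open Polynomial Filter Topology Nat
open scoped ENNReal NNReal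

noncomputable def pg (y : ℝ) : ℝ := (Real.sqrt (2 * Real.pi))⁻¹ * Real.exp (-(y^2)/2)

lemma pg_eq (y : ℝ) : pg y = gaussianPDFReal 0 1 y := by
  simp [pg, gaussianPDFReal]

lemma pg_nonneg (y : ℝ) : 0 ≤ pg y := by
  unfold pg; positivity

lemma pg_hasDeriv (y : ℝ) : HasDerivAt pg (-y * pg y) y := by
  unfold pg
  have h1 : HasDerivAt (fun y : ℝ => -(y^2)/2) (-y) y := by
    have := ((hasDerivAt_pow 2 y).neg).div_const 2
    simpa using this.congr_deriv (by ring)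
  have h2 := (h1.exp).const_mul (Real.sqrt (2 * Real.pi))⁻¹
  refine h2.congr_deriv ?_
  ring

lemma integrable_pow_mul_pg (n : ℕ) : Integrable (fun y => y ^ n * pg y) := by
  have h : Integrable (fun y : ℝ => y ^ (n : ℝ) * Real.exp (-(1/2 : ℝ) * y ^ 2)) :=
    integrable_rpow_mul_exp_neg_mul_sq (by norm_num) (by exact_mod_cast neg_one_lt_zero.trans_le (Nat.cast_nonneg n) : (-1:ℝ) < n)
  have h2 : Integrable (fun y : ℝ => y ^ n * Real.exp (-(1/2 : ℝ) * y ^ 2)) := by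
    simpa [Real.rpow_natCast] using h
  have := h2.const_mul (Real.sqrt (2 * Real.pi))⁻¹
  apply this.congr
  filter_upwards with y
  unfold pg
  ring_nf

lemma integrable_poly_mul_pg (P : ℝ[X]) : Integrable (fun y => P.eval y * pg y) := by
  induction P using Polynomial.induction_on' with
  | monomial n c =>
    simpa [mul_assoc] using (integrable_pow_mul_pg n).const_mul c
  | add p q hp hq =>
    simpa [add_mul] using (hp.add hq : Integrable (fun y => p.eval y * pg y + q.eval y * pg y))

lemma tendsto_pow_mul_pg (n : ℕ) :
    Tendsto (fun y : ℝ => y ^ n * pg y) (cocompact ℝ) (𝓝 0) := by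
  have h := tendsto_rpow_abs_mul_exp_neg_mul_sq_cocompact (by norm_num : (0:ℝ) < 1/2) n
  have h2 := h.const_mul (Real.sqrt (2 * Real.pi))⁻¹
  rw [mul_zero] at h2
  apply squeeze_zero_norm _ h2
  intro y
  have : |y ^ n * pg y| = |y| ^ n * pg y := by
    rw [abs_mul, abs_pow, abs_of_nonneg (pg_nonneg y)]
  rw [Real.norm_eq_abs, this]
  unfold pg
  rw [← Real.rpow_natCast |y|]
  have : -(y^2)/2 = -(1/2) * y ^ 2 := by ring
  rw [this]
  have h3 : (0:ℝ) < (Real.sqrt (2 * Real.pi))⁻¹ := by positivity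
  rw [mul_comm ((Real.sqrt (2 * Real.pi))⁻¹)]
  rw [← mul_assoc]
  exact le_of_eq (by ring)

lemma tendsto_poly_mul_pg (P : ℝ[X]) :
    Tendsto (fun y : ℝ => P.eval y * pg y) (cocompact ℝ) (𝓝 0) := by
  induction P using Polynomial.induction_on' with
  | monomial n c =>
    have := (tendsto_pow_mul_pg n).const_mul c
    rw [mul_zero] at this
    simpa [mul_assoc] using this
  | add p q hp hq =>
    have := hp.add hq
    rw [add_zero] at this
    simpa [add_mul] using this

noncomputable def HI (P : ℝ[X]) : ℝ := ∫ y, P.eval y * pg y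

lemma HI_sub (P Q : ℝ[X]) : HI (P - Q) = HI P - HI Q := by
  unfold HI
  rw [← integral_sub (integrable_poly_mul_pg P) (integrable_poly_mul_pg Q)]
  simp [sub_mul]

lemma HI_Cmul (a : ℝ) (P : ℝ[X]) : HI (C a * P) = a * HI P := by
  unfold HI
  rw [← integral_const_mul]
  simp [mul_assoc]

lemma stein (P : ℝ[X]) : HI (X * P) = HI (derivative P) := by
  have key : ∫ y, (X * P - derivative P).eval y * pg y = 0 := by
    have hd : ∀ y : ℝ, HasDerivAt (fun y => -(P.eval y * pg y))
        ((X * P - derivative P).eval y * pg y) y := by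
      intro y
      have := ((P.hasDerivAt y).mul (pg_hasDeriv y)).neg
      refine this.congr_deriv ?_
      simp only [eval_sub, eval_mul, eval_X]
      ring
    have hint : Integrable (fun y => (X * P - derivative P).eval y * pg y) :=
      integrable_poly_mul_pg _
    have htop : Tendsto (fun y => -(P.eval y * pg y)) atTop (𝓝 0) := by
      have := (tendsto_poly_mul_pg P).neg
      rw [neg_zero] at this
      exact this.mono_left (atTop_le_cocompact)
    have hbot : Tendsto (fun y => -(P.eval y * pg y)) atBot (𝓝 0) := by
      have := (tendsto_poly_mul_pg P).neg
      rw [neg_zero] at this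
      exact this.mono_left (atBot_le_cocompact)
    have := MeasureTheory.integral_of_hasDerivAt_of_tendsto hd hint hbot htop
    simpa using this
  have := HI_sub (X * P) (derivative P)
  unfold HI at this key ⊢
  rw [key] at this
  linarith [this]

lemma derivative_hermite_succ (n : ℕ) :
    derivative (Polynomial.hermite (n + 1)) = C ((n : ℤ) + 1) * Polynomial.hermite n := by
  induction n with
  | zero => simp [Polynomial.hermite_one, Polynomial.hermite_zero]
  | succ n ih =>
    rw [Polynomial.hermite_succ (n + 1)]
    rw [derivative_sub, derivative_mul, derivative_X, one_mul, ih]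
    rw [derivative_mul, derivative_C, zero_mul]
    rw [Polynomial.hermite_succ n]
    push_cast
    simp only [C_add, C_1]
    ring

lemma derivative_hermite (n : ℕ) :
    derivative (Polynomial.hermite n) = C (n : ℤ) * Polynomial.hermite (n - 1) := by
  cases n with
  | zero => simp [Polynomial.hermite_zero]
  | succ n => simpa using derivative_hermite_succ n

noncomputable def S (c : ℝ) (n : ℕ) : ℝ[X] :=
  ((Polynomial.hermite n).map (Int.castRingHom ℝ)).comp (C c * X)

lemma derivative_S (c : ℝ) (n : ℕ) :
    derivative (S c n) = C (c * n) * S c (n - 1) := by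
  unfold S
  rw [derivative_comp, derivative_map, derivative_hermite]
  simp only [Polynomial.map_mul, map_C, derivative_mul, derivative_C, derivative_X,
    zero_mul, one_mul, add_zero, mul_comp, C_comp, Int.coe_castRingHom]
  push_cast
  rw [C_mul]
  ring

lemma S_succ (c : ℝ) (n : ℕ) :
    S c (n + 1) = C c * X * S c n - C (n : ℝ) * S c (n - 1) := by
  unfold S
  rw [Polynomial.hermite_succ, derivative_hermite, Polynomial.map_sub, Polynomial.map_mul,
    map_X, Polynomial.map_mul, map_C, sub_comp, mul_comp, mul_comp, X_comp, C_comp]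
  simp only [Int.coe_castRingHom, Int.cast_natCast, eq_intCast]

noncomputable def A (c : ℝ) (n m : ℕ) : ℝ := HI (S c n * S c m)

lemma A_symm (c : ℝ) (n m : ℕ) : A c n m = A c m n := by
  unfold A; rw [mul_comm]

lemma A_rec (c : ℝ) (n m : ℕ) :
    A c (n + 1) m = (c ^ 2 - 1) * n * A c (n - 1) m + c ^ 2 * m * A c n (m - 1) := by
  have h1 : S c (n + 1) * S c m
      = C c * (X * (S c n * S c m)) - C (n : ℝ) * (S c (n - 1) * S c m) := by
    rw [S_succ]; ring
  have h2 : HI (C c * (X * (S c n * S c m))) = c * HI (X * (S c n * S c m)) := HI_Cmul _ _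
  have h3 : HI (X * (S c n * S c m)) = HI (derivative (S c n * S c m)) := stein _
  have h4 : derivative (S c n * S c m)
      = C (c * n) * (S c (n - 1) * S c m) + C (c * m) * (S c n * S c (m - 1)) := by
    rw [derivative_mul, derivative_S, derivative_S]; ring
  have h5 : HI (derivative (S c n * S c m))
      = c * n * A c (n - 1) m + c * m * A c n (m - 1) := by
    rw [h4]
    have : C (c * (n:ℝ)) * (S c (n - 1) * S c m) + C (c * m) * (S c n * S c (m - 1))
        = C (c * (n:ℝ)) * (S c (n - 1) * S c m) - (- (C (c * m) * (S c n * S c (m - 1)))) := by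
      ring
    rw [this]
    have hneg : -(C (c * (m:ℝ)) * (S c n * S c (m - 1)))
        = C (-(c * m)) * (S c n * S c (m - 1)) := by
      rw [map_neg]; ring
    rw [HI_sub, hneg, HI_Cmul, HI_Cmul]
    unfold A
    ring
  unfold A
  rw [h1, HI_sub, h2, h3, h5, HI_Cmul]
  unfold A
  ring

noncomputable def W (c : ℝ) (n m : ℕ) : ℝ :=
  (2 * |c|) ^ (n + m) * Real.sqrt (((n ! * m ! : ℕ) : ℝ) / 2 ^ ((n - m) + (m - n)))

lemma W_nonneg (c : ℝ) (n m : ℕ) : 0 ≤ W c n m := by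
  unfold W; positivity

lemma W_symm (c : ℝ) (n m : ℕ) : W c n m = W c m n := by
  unfold W
  rw [Nat.mul_comm (n !), Nat.add_comm (n - m), Nat.add_comm n m]

lemma sqrt_div_le (a b e f : ℕ) (h : a * 2 ^ f ≤ b * 2 ^ e) :
    Real.sqrt ((a : ℝ) / 2 ^ e) ≤ Real.sqrt ((b : ℝ) / 2 ^ f) := by
  apply Real.sqrt_le_sqrt
  rw [div_le_div_iff₀ (by positivity) (by positivity)]
  exact_mod_cast h

lemma two_abs_sq (c : ℝ) : (2 * |c|) ^ 2 = 4 * c ^ 2 := by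
  rw [mul_pow, sq_abs]; norm_num

lemma lemA (c : ℝ) (n m : ℕ) (hm : m ≤ n + 1) :
    c ^ 2 * n * W c (n - 1) m ≤ 1 / 2 * W c (n + 1) m := by
  cases n with
  | zero => simpa using mul_nonneg (by norm_num : (0:ℝ) ≤ 1/2) (W_nonneg c 1 m)
  | succ k =>
    have hm' : m ≤ k + 2 := by omega
    unfold W
    simp only [Nat.add_sub_cancel]
    have hpow : (2 * |c|) ^ (k + 1 + 1 + m) = (2 * |c|) ^ (k + m) * (4 * c ^ 2) := by
      rw [← two_abs_sq c, ← pow_add]; ring_nf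
    rw [hpow]
    have key : ((k : ℝ) + 1) * Real.sqrt (((k ! * m ! : ℕ) : ℝ) / 2 ^ ((k - m) + (m - k)))
        ≤ 2 * Real.sqrt ((((k + 2)! * m ! : ℕ) : ℝ) / 2 ^ ((k + 2 - m) + (m - (k + 2)))) := by
      have h1 : ((k : ℝ) + 1) * Real.sqrt (((k ! * m ! : ℕ) : ℝ) / 2 ^ ((k - m) + (m - k)))
          = Real.sqrt ((((k + 1) ^ 2 * (k ! * m !) : ℕ) : ℝ) / 2 ^ ((k - m) + (m - k))) := by
        rw [← Real.sqrt_sq (by positivity : (0:ℝ) ≤ (k : ℝ) + 1), ← Real.sqrt_mul (by positivity)]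
        congr 1
        push_cast
        ring
      have h2 : (2 : ℝ) * Real.sqrt ((((k + 2)! * m ! : ℕ) : ℝ) / 2 ^ ((k + 2 - m) + (m - (k + 2))))
          = Real.sqrt (((4 * ((k + 2)! * m !) : ℕ) : ℝ) / 2 ^ ((k + 2 - m) + (m - (k + 2)))) := by
        rw [← Real.sqrt_sq (by norm_num : (0:ℝ) ≤ 2), ← Real.sqrt_mul (by positivity)]
        congr 1
        push_cast
        ring
      rw [h1, h2]
      apply sqrt_div_le
      have hd : (k + 2 - m) + (m - (k + 2)) ≤ (k - m) + (m - k) + 2 := by omega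
      calc (k + 1) ^ 2 * (k ! * m !) * 2 ^ ((k + 2 - m) + (m - (k + 2)))
          ≤ (k + 2)! * m ! * 2 ^ ((k - m) + (m - k) + 2) := by
            apply Nat.mul_le_mul
            · have : (k + 1) ^ 2 * k ! ≤ (k + 2)! := by
                rw [Nat.factorial_succ (k+1), Nat.factorial_succ k]
                nlinarith [Nat.one_le_iff_ne_zero.mpr (Nat.factorial_ne_zero k)]
              calc (k + 1) ^ 2 * (k ! * m !) = ((k + 1) ^ 2 * k !) * m ! := by ring
                _ ≤ (k + 2)! * m ! := Nat.mul_le_mul_right _ this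
            · exact Nat.pow_le_pow_right (by norm_num) hd
        _ = 4 * ((k + 2)! * m !) * 2 ^ ((k - m) + (m - k)) := by ring
    calc c ^ 2 * (k + 1 : ℕ) * ((2 * |c|) ^ (k + m) *
            Real.sqrt (((k ! * m ! : ℕ) : ℝ) / 2 ^ ((k - m) + (m - k))))
        = (c ^ 2 * (2 * |c|) ^ (k + m)) *
            (((k : ℝ) + 1) * Real.sqrt (((k ! * m ! : ℕ) : ℝ) / 2 ^ ((k - m) + (m - k)))) := by
          push_cast; ring
      _ ≤ (c ^ 2 * (2 * |c|) ^ (k + m)) *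
            (2 * Real.sqrt ((((k + 2)! * m ! : ℕ) : ℝ) / 2 ^ ((k + 2 - m) + (m - (k + 2))))) := by
          apply mul_le_mul_of_nonneg_left key (by positivity)
      _ = 1 / 2 * ((2 * |c|) ^ (k + m) * (4 * c ^ 2) *
            Real.sqrt ((((k + 1 + 1)! * m ! : ℕ) : ℝ) / 2 ^ ((k + 1 + 1 - m) + (m - (k + 1 + 1))))) := by
          norm_num
          ring

lemma lemB (c : ℝ) (n m : ℕ) (hm : m ≤ n + 1) :
    c ^ 2 * m * W c n (m - 1) ≤ 1 / 4 * W c (n + 1) m := by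
  cases m with
  | zero => simpa using mul_nonneg (by norm_num : (0:ℝ) ≤ 1/4) (W_nonneg c (n+1) 0)
  | succ j =>
    have hj : j + 1 ≤ n + 1 := hm
    unfold W
    simp only [Nat.add_sub_cancel]
    have hpow : (2 * |c|) ^ (n + 1 + (j + 1)) = (2 * |c|) ^ (n + j) * (4 * c ^ 2) := by
      rw [← two_abs_sq c, ← pow_add]; ring_nf
    rw [hpow]
    have key : ((j : ℝ) + 1) * Real.sqrt (((n ! * j ! : ℕ) : ℝ) / 2 ^ ((n - j) + (j - n)))
        ≤ Real.sqrt ((((n + 1)! * (j + 1)! : ℕ) : ℝ) / 2 ^ ((n + 1 - (j + 1)) + (j + 1 - (n + 1)))) := by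
      have h1 : ((j : ℝ) + 1) * Real.sqrt (((n ! * j ! : ℕ) : ℝ) / 2 ^ ((n - j) + (j - n)))
          = Real.sqrt ((((j + 1) ^ 2 * (n ! * j !) : ℕ) : ℝ) / 2 ^ ((n - j) + (j - n))) := by
        rw [← Real.sqrt_sq (by positivity : (0:ℝ) ≤ (j : ℝ) + 1), ← Real.sqrt_mul (by positivity)]
        congr 1
        push_cast
        ring
      rw [h1]
      apply sqrt_div_le
      have hd : (n + 1 - (j + 1)) + (j + 1 - (n + 1)) = (n - j) + (j - n) := by omega
      rw [hd]
      apply Nat.mul_le_mul_right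
      calc (j + 1) ^ 2 * (n ! * j !) = (j + 1) * (n ! * (j + 1)!) := by
            rw [Nat.factorial_succ j]; ring
        _ ≤ (n + 1) * (n ! * (j + 1)!) := Nat.mul_le_mul_right _ hj
        _ = (n + 1)! * (j + 1)! := by rw [Nat.factorial_succ n]; ring
    calc c ^ 2 * (j + 1 : ℕ) * ((2 * |c|) ^ (n + (j + 1 - 1)) *
            Real.sqrt (((n ! * j ! : ℕ) : ℝ) / 2 ^ ((n - j) + (j - n))))
        = (c ^ 2 * (2 * |c|) ^ (n + j)) *
            (((j : ℝ) + 1) * Real.sqrt (((n ! * j ! : ℕ) : ℝ) / 2 ^ ((n - j) + (j - n)))) := by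
          push_cast; ring_nf
      _ ≤ (c ^ 2 * (2 * |c|) ^ (n + j)) *
            Real.sqrt ((((n + 1)! * (j + 1)! : ℕ) : ℝ) / 2 ^ ((n + 1 - (j + 1)) + (j + 1 - (n + 1)))) := by
          apply mul_le_mul_of_nonneg_left key (by positivity)
      _ = 1 / 4 * ((2 * |c|) ^ (n + j) * (4 * c ^ 2) *
            Real.sqrt ((((n + 1)! * (j + 1)! : ℕ) : ℝ) / 2 ^ ((n + 1 - (j + 1)) + (j + 1 - (n + 1))))) := by
          ring

lemma HI_one : HI 1 = 1 := by
  unfold HI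
  simp only [eval_one, one_mul]
  simp_rw [pg_eq]
  exact integral_gaussianPDFReal_eq_one 0 one_ne_zero

lemma S_zero (c : ℝ) : S c 0 = 1 := by
  unfold S
  rw [Polynomial.hermite_zero]
  simp

lemma A_zero_zero (c : ℝ) : A c 0 0 = 1 := by
  unfold A
  rw [S_zero, mul_one, HI_one]

lemma W_zero_zero (c : ℝ) : W c 0 0 = 1 := by
  unfold W
  simp

lemma W_diag (c : ℝ) (k : ℕ) : W c k k = (4 * c ^ 2) ^ k * (k ! : ℝ) := by
  unfold W
  simp only [Nat.sub_self, Nat.add_zero, pow_zero, div_one]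
  rw [Nat.cast_mul, Real.sqrt_mul_self (by positivity)]
  rw [← two_mul, pow_mul, mul_pow, sq_abs]
  norm_num

lemma eval_S (c y : ℝ) (k : ℕ) :
    (S c k).eval y = Polynomial.aeval (c * y) (Polynomial.hermite k) := by
  unfold S
  rw [eval_comp, eval_mul, eval_C, eval_X, Polynomial.aeval_def, ← Polynomial.eval_map]
  rfl

lemma integral_gauss_eq (f : ℝ → ℝ) :
    ∫ y, f y ∂(gaussianReal 0 1) = ∫ y, f y * pg y := by
  rw [gaussianReal_of_var_ne_zero 0 one_ne_zero]
  have hmeas : Measurable fun y => (gaussianPDFReal 0 1 y).toNNReal :=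
    (measurable_gaussianPDFReal 0 1).real_toNNReal
  have hd : (fun x => ENNReal.ofReal (gaussianPDFReal 0 1 x))
      = fun y => ((gaussianPDFReal 0 1 y).toNNReal : ℝ≥0∞) := rfl
  rw [gaussianPDF_def, hd, integral_withDensity_eq_integral_smul hmeas f]
  congr 1
  funext y
  rw [NNReal.smul_def, Real.coe_toNNReal _ (gaussianPDFReal_nonneg 0 1 y), smul_eq_mul,
    ← pg_eq, mul_comm]

lemma one_le_sq {c : ℝ} (hc : 1 ≤ |c|) : 1 ≤ c ^ 2 := by
  nlinarith [sq_abs c, abs_nonneg c]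

lemma step (c : ℝ) (hc : 1 ≤ |c|) (s : ℕ)
    (IH : ∀ n m, n + m ≤ s → |A c n m| ≤ W c n m)
    (n m : ℕ) (hm : m ≤ n + 1) (hs : n + m ≤ s) :
    |A c (n + 1) m| ≤ W c (n + 1) m := by
  have hc2 : 1 ≤ c ^ 2 := one_le_sq hc
  have h1 : |A c (n - 1) m| ≤ W c (n - 1) m := IH _ _ (by omega)
  have h2 : |A c n (m - 1)| ≤ W c n (m - 1) := IH _ _ (by omega)
  rw [A_rec]
  calc |(c ^ 2 - 1) * n * A c (n - 1) m + c ^ 2 * m * A c n (m - 1)|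
      ≤ |(c ^ 2 - 1) * n * A c (n - 1) m| + |c ^ 2 * m * A c n (m - 1)| := abs_add_le _ _
    _ = (c ^ 2 - 1) * n * |A c (n - 1) m| + c ^ 2 * m * |A c n (m - 1)| := by
        rw [abs_mul, abs_mul, abs_mul, abs_mul]
        rw [abs_of_nonneg (by linarith : (0:ℝ) ≤ c ^ 2 - 1),
          abs_of_nonneg (by positivity : (0:ℝ) ≤ c ^ 2),
          abs_of_nonneg (by positivity : (0:ℝ) ≤ (n:ℝ)),
          abs_of_nonneg (by positivity : (0:ℝ) ≤ (m:ℝ))]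
    _ ≤ c ^ 2 * n * W c (n - 1) m + c ^ 2 * m * W c n (m - 1) := by
        have t1 : (c ^ 2 - 1) * (n : ℝ) ≤ c ^ 2 * n := by
          nlinarith [Nat.cast_nonneg (α := ℝ) n]
        have e1 : (c ^ 2 - 1) * n * |A c (n - 1) m| ≤ c ^ 2 * n * W c (n - 1) m :=
          calc (c ^ 2 - 1) * n * |A c (n - 1) m| ≤ c ^ 2 * n * |A c (n - 1) m| :=
              mul_le_mul_of_nonneg_right t1 (abs_nonneg _)
            _ ≤ c ^ 2 * n * W c (n - 1) m :=
              mul_le_mul_of_nonneg_left h1 (by positivity)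
        have e2 : c ^ 2 * m * |A c n (m - 1)| ≤ c ^ 2 * m * W c n (m - 1) :=
          mul_le_mul_of_nonneg_left h2 (by positivity)
        linarith
    _ ≤ 1 / 2 * W c (n + 1) m + 1 / 4 * W c (n + 1) m :=
        add_le_add (lemA c n m hm) (lemB c n m hm)
    _ ≤ W c (n + 1) m := by linarith [W_nonneg c (n + 1) m]

lemma abs_A_le (c : ℝ) (hc : 1 ≤ |c|) : ∀ s n m, n + m ≤ s → |A c n m| ≤ W c n m := by
  intro s
  induction s with
  | zero =>
    intro n m h
    have hn : n = 0 := by omega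
    have hm : m = 0 := by omega
    subst hn; subst hm
    rw [A_zero_zero, W_zero_zero]
    norm_num
  | succ s IH =>
    intro n m h
    rcases Nat.lt_or_ge (n + m) (s + 1) with h' | h'
    · exact IH n m (by omega)
    · have hnm : n + m = s + 1 := by omega
      rcases le_or_gt m n with hle | hlt
      · have hn : n ≠ 0 := by omega
        obtain ⟨n', rfl⟩ := Nat.exists_eq_succ_of_ne_zero hn
        exact step c hc s IH n' m (by omega) (by omega)
      · have hm : m ≠ 0 := by omega
        obtain ⟨m', rfl⟩ := Nat.exists_eq_succ_of_ne_zero hm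
        rw [A_symm, W_symm]
        exact step c hc s IH m' n (by omega) (by omega)

end HermiteAux

open HermiteAux Polynomial Nat in
/-- Second moment of scaled Hermite polynomials: for `Y ∼ N(0,1)` and
`|c| ≥ 1`, `E[h_k(cY)²] ≤ 2·(4c²)^k`. -/
theorem hermite_scaled_second_moment (c : ℝ) (hc : 1 ≤ |c|) (k : ℕ) :
    (∫ y, (hermiteN k (c * y)) ^ 2 ∂(gaussianReal 0 1)) ≤ 2 * (4 * c ^ 2) ^ k := by
  have hfact : (0:ℝ) < (k ! : ℝ) := by exact_mod_cast Nat.factorial_pos k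
  have hpt : ∀ y : ℝ, (hermiteN k (c * y)) ^ 2 = (S c k * S c k).eval y * ((k ! : ℝ))⁻¹ := by
    intro y
    unfold hermiteN
    rw [eval_mul, eval_S, div_pow, Real.sq_sqrt (by positivity)]
    rw [sq]
    field_simp
  have h1 : (∫ y, (hermiteN k (c * y)) ^ 2 ∂(gaussianReal 0 1))
      = A c k k * ((k ! : ℝ))⁻¹ := by
    simp_rw [hpt]
    rw [integral_gauss_eq]
    unfold A HI
    rw [← integral_mul_const]
    congr 1
    funext y
    ring
  rw [h1]
  have h2 : A c k k ≤ (4 * c ^ 2) ^ k * (k ! : ℝ) := by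
    have := abs_A_le c hc (k + k) k k le_rfl
    rw [W_diag] at this
    exact (le_abs_self _).trans this
  have h3 : A c k k * ((k ! : ℝ))⁻¹ ≤ (4 * c ^ 2) ^ k := by
    rw [← div_eq_mul_inv, div_le_iff₀ hfact]
    exact h2
  have h4 : (0:ℝ) ≤ (4 * c ^ 2) ^ k := by positivity
  linarith
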